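/- Let D be an n×n real symmetric positive-definite matrix with largest eigenvalue λ, let κ > 0 and let ψ(x) = e^{−κ|x|}. Then for every C¹ function v : ℝ → ℝⁿ such that v and v' are bounded, |v(0)|_D² ≤ max( (1 + κλ)/2, λ/2 ) · ∫_ℝ ψ(x) ( |v(x)|² + |v'(x)|_D² ) dx. -/

import Mathlib

noncomputable section

open MeasureTheory Filter Real Set

abbrev EucSp (n : ℕ) := EuclideanSpace ℝ (Fin n)

variable {n : ℕ}

/-- The scalar product `⟨v, w⟩_D = v · (D w)` associated to the matrix `D`. -/
def dotD (D : Matrix (Fin n) (Fin n) ℝ) (v w : EucSp n) : ℝ :=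
  ∑ i, v i * ∑ j, D i j * w j

/-- The norm `|v|_D = ⟨v, v⟩_D ^ (1/2)` associated to the matrix `D`. -/
def normD (D : Matrix (Fin n) (Fin n) ℝ) (v : EucSp n) : ℝ :=
  Real.sqrt (dotD D v v)

/-- The matrix `D` acting on a vector. -/
def matVec (D : Matrix (Fin n) (Fin n) ℝ) (v : EucSp n) : EucSp n :=
  WithLp.toLp 2 (fun i => ∑ j, D i j * v j)

/-- Quadratic form of the Hessian of `V` at `p`, evaluated on `w`. -/
def hessQ (V : EucSp n → ℝ) (p w : EucSp n) : ℝ :=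
  inner ℝ w ((fderiv ℝ (gradient V) p) w)

/-- Positive definiteness of the Hessian of `V` at `p`. -/
def HessPosDef (V : EucSp n → ℝ) (p : EucSp n) : Prop :=
  ∀ w : EucSp n, w ≠ 0 → 0 < hessQ V p w

/-- `M₀`: the set of nondegenerate minimum points of `V` in the level set `V⁻¹({0})`. -/
def M0 (V : EucSp n → ℝ) : Set (EucSp n) :=
  {m | V m = 0 ∧ gradient V m = 0 ∧ HessPosDef V m}

/-- Hypothesis (Coerc). -/
def Coerc (V : EucSp n → ℝ) : Prop :=
  ∃ ε > (0:ℝ), ∃ R₀ > (0:ℝ), ∀ v : EucSp n, R₀ ≤ ‖v‖ →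
    ε * ‖v‖ ^ 2 ≤ (inner ℝ v (gradient V v) : ℝ)

/-- Hypothesis (OnlyMin). -/
def OnlyMin (V : EucSp n → ℝ) : Prop :=
  ∀ v : EucSp n, V v = 0 → gradient V v = 0 → HessPosDef V v

/-- Classical solution of `u_t = -∇V(u) + D u_xx` on `ℝ × (0,∞)`,
with the partial derivatives given as data `ux`, `uxx`, `ut`. -/
def IsClassicalSolution (V : EucSp n → ℝ) (D : Matrix (Fin n) (Fin n) ℝ)
    (u ux uxx ut : ℝ → ℝ → EucSp n) : Prop :=
  ContinuousOn (fun p : ℝ × ℝ => u p.1 p.2) (Set.univ ×ˢ Set.Ici 0) ∧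
  (∀ (x : ℝ), ∀ t > (0:ℝ), HasDerivAt (fun y => u y t) (ux x t) x) ∧
  (∀ (x : ℝ), ∀ t > (0:ℝ), HasDerivAt (fun y => ux y t) (uxx x t) x) ∧
  (∀ (x : ℝ), ∀ t > (0:ℝ), HasDerivAt (fun s => u x s) (ut x t) t) ∧
  ContinuousOn (fun p : ℝ × ℝ => ux p.1 p.2) (Set.univ ×ˢ Set.Ioi 0) ∧
  ContinuousOn (fun p : ℝ × ℝ => uxx p.1 p.2) (Set.univ ×ˢ Set.Ioi 0) ∧
  ContinuousOn (fun p : ℝ × ℝ => ut p.1 p.2) (Set.univ ×ˢ Set.Ioi 0) ∧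
  ∀ (x : ℝ), ∀ t > (0:ℝ), ut x t = -gradient V (u x t) + matVec D (uxx x t)

/-- Regular and bounded solution: bounded on `ℝ × [0,∞)`, and for every `ε > 0`
all partial derivatives of order `≤ 3` exist, are continuous and bounded on `ℝ × [ε,∞)`. -/
def RegularBounded (u : ℝ → ℝ → EucSp n) : Prop :=
  (∃ C, ∀ x t : ℝ, 0 ≤ t → ‖u x t‖ ≤ C) ∧
  ∀ ε > (0:ℝ),
    ContDiffOn ℝ 3 (fun p : ℝ × ℝ => u p.1 p.2) (Set.univ ×ˢ Set.Ici ε) ∧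
    ∀ i : ℕ, i ≤ 3 → ∃ C, ∀ p ∈ (Set.univ ×ˢ Set.Ici ε : Set (ℝ × ℝ)),
      ‖iteratedFDerivWithin ℝ i (fun q : ℝ × ℝ => u q.1 q.2)
        (Set.univ ×ˢ Set.Ici ε) p‖ ≤ C

/-- Bistable solution connecting `mm` to `mp`. -/
def Bistable (u : ℝ → ℝ → EucSp n) (mm mp : EucSp n) : Prop :=
  Tendsto (fun t => Filter.limsup (fun x => ‖u x t - mm‖) Filter.atBot)
    Filter.atTop (nhds 0) ∧
  Tendsto (fun t => Filter.limsup (fun x => ‖u x t - mp‖) Filter.atTop)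
    Filter.atTop (nhds 0)

/-- The energy (Lagrangian) density `½|w|_D² + V(v)`. -/
def lagr (V : EucSp n → ℝ) (D : Matrix (Fin n) (Fin n) ℝ) (v w : EucSp n) : ℝ :=
  (1/2) * dotD D w w + V v

/-- Hypothesis (E_fin): the asymptotic energy is not `-∞`. -/
def EFin (V : EucSp n → ℝ) (D : Matrix (Fin n) (Fin n) ℝ)
    (u ux : ℝ → ℝ → EucSp n) : Prop :=
  ∃ c > (0:ℝ), (⊥ : EReal) <
    Filter.liminf
      (fun t => ((∫ x in (-(c*t))..(c*t), lagr V D (u x t) (ux x t) : ℝ) : EReal))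
      Filter.atTop

/-- Stationary solution: a `C²` function with `D u'' = ∇V(u)`. -/
def IsStationarySol (V : EucSp n → ℝ) (D : Matrix (Fin n) (Fin n) ℝ)
    (w : ℝ → EucSp n) : Prop :=
  ContDiff ℝ 2 w ∧ ∀ x : ℝ, matVec D (deriv (deriv w) x) = gradient V (w x)

/-- `w(x) → mm` as `x → -∞` and `w(x) → mp` as `x → +∞`. -/
def Connects (w : ℝ → EucSp n) (mm mp : EucSp n) : Prop :=
  Tendsto w atBot (nhds mm) ∧ Tendsto w atTop (nhds mp)

/-- `S(M₀)`: bistable stationary solutions connecting points of `M₀`. -/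
def SM0 (V : EucSp n → ℝ) (D : Matrix (Fin n) (Fin n) ℝ) : Set (ℝ → EucSp n) :=
  {w | IsStationarySol V D w ∧ ∃ mm ∈ M0 V, ∃ mp ∈ M0 V, Connects w mm mp}

/-- `I(S(M₀))`: trajectories of bistable stationary solutions in phase space `ℝ²ⁿ`. -/
def ISM0 (V : EucSp n → ℝ) (D : Matrix (Fin n) (Fin n) ℝ) : Set (EucSp n × EucSp n) :=
  {p | ∃ w ∈ SM0 V D, ∃ x : ℝ, p = (w x, deriv w x)}

/-- `λ_{V,min}`: smallest eigenvalue of the Hessians of `V` at points of `M₀`. -/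
def lamMin (V : EucSp n → ℝ) : ℝ :=
  sInf {l | ∃ m ∈ M0 V, ∃ w : EucSp n, ‖w‖ = 1 ∧ l = hessQ V m w}

/-- `λ_{V,max}`: largest eigenvalue of the Hessians of `V` at points of `M₀`. -/
def lamMax (V : EucSp n → ℝ) : ℝ :=
  sSup {l | ∃ m ∈ M0 V, ∃ w : EucSp n, ‖w‖ = 1 ∧ l = hessQ V m w}

/-- `d_Esc` is admissible: positive and, for every `m ∈ M₀` and every `v` with
`|v-m|_D ≤ d_Esc`, every eigenvalue of `D²V(v)` lies in `[λ_{V,min}/2, 2 λ_{V,max}]`. -/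
def EscHyp (V : EucSp n → ℝ) (D : Matrix (Fin n) (Fin n) ℝ) (dEsc : ℝ) : Prop :=
  0 < dEsc ∧ ∀ m ∈ M0 V, ∀ v : EucSp n, normD D (v - m) ≤ dEsc →
    ∀ w : EucSp n, ‖w‖ = 1 → lamMin V / 2 ≤ hessQ V v w ∧ hessQ V v w ≤ 2 * lamMax V

/-- `q = min_{m ∈ M₀} inf_{v ≠ m} V(v)/|v-m|²`. -/
def qlow (V : EucSp n → ℝ) : ℝ :=
  sInf {r | ∃ m ∈ M0 V, ∃ v : EucSp n, v ≠ m ∧ r = V v / ‖v - m‖ ^ 2}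

/-- The weighting `c_E = 1 / max(1, -4q)` of the energy in the firewall function. -/
def cEn (V : EucSp n → ℝ) : ℝ := 1 / max 1 (-(4 * qlow V))

/-- The weight `ψ_κ(x) = e^{-κ|x|}`. -/
def psiW (κ x : ℝ) : ℝ := Real.exp (-(κ * |x|))

/-- The firewall functional. -/
def firewall (V : EucSp n → ℝ) (D : Matrix (Fin n) (Fin n) ℝ) (κ : ℝ)
    (u ux : ℝ → ℝ → EucSp n) (ξ t : ℝ) : ℝ :=
  ∫ x : ℝ, psiW κ (x - ξ) *
    (cEn V * lagr V D (u x t) (ux x t) + (1/2) * ‖u x t‖ ^ 2)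

/-- `Σ_Esc(t) = {x : |u(x,t)|_D > d_Esc}` (for the minimum point `0`). -/
def escSet (D : Matrix (Fin n) (Fin n) ℝ) (dEsc : ℝ)
    (u : ℝ → ℝ → EucSp n) (t : ℝ) : Set ℝ := {x | dEsc < normD D (u x t)}

/-- The weight `χ(x,t) = min(1, e^{-κ(|x|-ct)})`. -/
def chiW (κ c x t : ℝ) : ℝ := min 1 (Real.exp (-(κ * (|x| - c * t))))

/-- `E` is the asymptotic energy of the solution `u`. -/
def AsympEnergy (V : EucSp n → ℝ) (D : Matrix (Fin n) (Fin n) ℝ)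
    (u ux : ℝ → ℝ → EucSp n) (E : EReal) : Prop :=
  ∃ c₀ > (0:ℝ), ∀ c ≥ c₀,
    Tendsto (fun t => ((∫ x in (-(c*t))..(c*t), lagr V D (u x t) (ux x t) : ℝ) : EReal))
      atTop (nhds E)

/-- Normalized bistable stationary solution (with left-end limit `mm`). -/
def Normalized (D : Matrix (Fin n) (Fin n) ℝ) (dEsc : ℝ)
    (w : ℝ → EucSp n) (mm : EucSp n) : Prop :=
  normD D (w 0 - mm) = dEsc ∧ ∀ x < (0:ℝ), normD D (w x - mm) < dEsc

/-- Hypothesis (DiscStat). -/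
def DiscStat (V : EucSp n → ℝ) (D : Matrix (Fin n) (Fin n) ℝ) (dEsc : ℝ) : Prop :=
  ∀ mm ∈ M0 V, IsTotallyDisconnected
    {p : EucSp n × EucSp n | ∃ w : ℝ → EucSp n, IsStationarySol V D w ∧
      (∃ mp ∈ M0 V, Connects w mm mp) ∧ (∃ x y : ℝ, w x ≠ w y) ∧
      Normalized D dEsc w mm ∧ p = (w 0, deriv w 0)}

open Topology

section AuxStatement7
variable {D : Matrix (Fin n) (Fin n) ℝ}

lemma coord_le_norm (a : EucSp n) (i : Fin n) : |a i| ≤ ‖a‖ := by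
  rw [EuclideanSpace.norm_eq, ← Real.sqrt_sq_eq_abs]
  apply Real.sqrt_le_sqrt
  refine Finset.single_le_sum (f := fun j => a j ^ 2) (fun j _ => sq_nonneg _)
    (Finset.mem_univ i) |>.trans_eq ?_
  simp [sq_abs]

lemma dotD_nonneg (hD : D.PosDef) (a : EucSp n) : 0 ≤ dotD D a a := by
  have h := hD.posSemidef.dotProduct_mulVec_nonneg (a : Fin n → ℝ)
  simpa [dotD, dotProduct, Matrix.mulVec, RCLike.re_to_real] using h

lemma dotD_comm (hD : D.PosDef) (a b : EucSp n) : dotD D a b = dotD D b a := by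
  have hsym : ∀ i j, D i j = D j i := by
    intro i j
    have h2 := congrFun (congrFun hD.isHermitian j) i
    simpa [Matrix.conjTranspose_apply] using h2
  simp only [dotD, Finset.mul_sum]
  rw [Finset.sum_comm]
  congr 1; ext i; congr 1; ext j
  rw [hsym j i]; ring

lemma dotD_eq' (a b : EucSp n) :
    dotD D a b = dotProduct (a : Fin n → ℝ) (D.mulVec (b : Fin n → ℝ)) := by
  simp [dotD, dotProduct, Matrix.mulVec]

lemma dotD_sub_self (hD : D.PosDef) (a b : EucSp n) :
    dotD D (a - b) (a - b) = dotD D a a - 2 * dotD D a b + dotD D b b := by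
  have hc : dotD D b a = dotD D a b := dotD_comm hD b a
  rw [dotD_eq', dotD_eq', dotD_eq', dotD_eq'] at *
  have hab : ((a - b : EucSp n) : Fin n → ℝ) = (a : Fin n → ℝ) - (b : Fin n → ℝ) := rfl
  rw [hab, Matrix.mulVec_sub, dotProduct_sub, sub_dotProduct,
    sub_dotProduct, hc]
  ring

lemma dotD_smul_right (c : ℝ) (a b : EucSp n) : dotD D a (c • b) = c * dotD D a b := by
  rw [dotD_eq', dotD_eq']
  have hcb : ((c • b : EucSp n) : Fin n → ℝ) = c • (b : Fin n → ℝ) := rfl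
  rw [hcb, Matrix.mulVec_smul, dotProduct_smul]
  simp

lemma dotD_smul_left (c : ℝ) (a b : EucSp n) : dotD D (c • a) b = c * dotD D a b := by
  rw [dotD_eq', dotD_eq']
  have hca : ((c • a : EucSp n) : Fin n → ℝ) = c • (a : Fin n → ℝ) := rfl
  rw [hca, smul_dotProduct]
  simp

lemma abs_dotD_le (a b : EucSp n) :
    |dotD D a b| ≤ (∑ i, ∑ j, |D i j|) * (‖a‖ * ‖b‖) := by
  calc |dotD D a b| ≤ ∑ i, |a i * ∑ j, D i j * b j| := Finset.abs_sum_le_sum_abs _ _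
    _ ≤ ∑ i, ‖a‖ * ∑ j, |D i j| * ‖b‖ := by
        apply Finset.sum_le_sum
        intro i _
        rw [abs_mul]
        apply mul_le_mul (coord_le_norm a i)
          ((Finset.abs_sum_le_sum_abs _ _).trans ?_) (abs_nonneg _) (norm_nonneg a)
        apply Finset.sum_le_sum
        intro j _
        rw [abs_mul]
        exact mul_le_mul_of_nonneg_left (coord_le_norm b j) (abs_nonneg _)
    _ = (∑ i, ∑ j, |D i j|) * (‖a‖ * ‖b‖) := by
        rw [Finset.sum_mul]
        congr 1; ext i
        rw [← Finset.sum_mul]; ring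

lemma lam_pos (hD : D.PosDef) {lam : ℝ}
    (hlam : IsGreatest {l : ℝ | ∃ w : EucSp n, ‖w‖ = 1 ∧ l = dotD D w w} lam) :
    0 < lam := by
  obtain ⟨w, hw, hlw⟩ := hlam.1
  have hw0 : (w : Fin n → ℝ) ≠ 0 := by
    intro h
    have : w = 0 := by
      apply norm_eq_zero.mp
      rw [EuclideanSpace.norm_eq]
      have : ∀ i, w i = 0 := fun i => congrFun h i
      simp [this]
    rw [this] at hw; simp at hw
  have h := hD.dotProduct_mulVec_pos hw0
  rw [hlw, dotD_eq']
  simpa using h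

lemma dotD_le_lam (hD : D.PosDef) {lam : ℝ}
    (hlam : IsGreatest {l : ℝ | ∃ w : EucSp n, ‖w‖ = 1 ∧ l = dotD D w w} lam)
    (a : EucSp n) : dotD D a a ≤ lam * ‖a‖ ^ 2 := by
  rcases eq_or_ne a 0 with rfl | h
  · simp [dotD]
  · have hna : (0:ℝ) < ‖a‖ := norm_pos_iff.mpr h
    set w : EucSp n := ‖a‖⁻¹ • a with hwdef
    have hw : ‖w‖ = 1 := by
      rw [hwdef, norm_smul]
      simp [abs_of_pos (inv_pos.mpr hna), inv_mul_cancel₀ hna.ne']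
    have hmem : dotD D w w ≤ lam := hlam.2 ⟨w, hw, rfl⟩
    have h1 : dotD D w w = ‖a‖⁻¹ * (‖a‖⁻¹ * dotD D a a) := by
      rw [hwdef, dotD_smul_left, dotD_smul_right]
    have h2 : dotD D a a = ‖a‖ ^ 2 * dotD D w w := by
      rw [h1]; field_simp
    rw [h2, mul_comm lam (‖a‖^2)]
    exact mul_le_mul_of_nonneg_left hmem (sq_nonneg _)

lemma dotD_cross (hD : D.PosDef) {lam : ℝ}
    (hlam : IsGreatest {l : ℝ | ∃ w : EucSp n, ‖w‖ = 1 ∧ l = dotD D w w} lam)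
    (a b : EucSp n) : 2 * dotD D a b ≤ ‖a‖ ^ 2 + lam * dotD D b b := by
  have hlp : 0 < lam := lam_pos hD hlam
  have h0 : 0 ≤ dotD D (a - lam • b) (a - lam • b) := dotD_nonneg hD _
  rw [dotD_sub_self hD, dotD_smul_right, dotD_smul_left, dotD_smul_right] at h0
  have hle : dotD D a a ≤ lam * ‖a‖ ^ 2 := dotD_le_lam hD hlam a
  nlinarith [h0, hle, hlp]

lemma hasDerivAt_dotD (hD : D.PosDef) (v : ℝ → EucSp n) {x : ℝ} {w : EucSp n}
    (hx : HasDerivAt v w x) :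
    HasDerivAt (fun y => dotD D (v y) (v y)) (2 * dotD D (v x) w) x := by
  have hcomp : ∀ i : Fin n, HasDerivAt (fun y => v y i) (w i) x := fun i =>
    (EuclideanSpace.proj (𝕜 := ℝ) i).hasFDerivAt.comp_hasDerivAt x hx
  have hsum : ∀ i : Fin n, HasDerivAt (fun y => ∑ j, D i j * v y j) (∑ j, D i j * w j) x :=
    fun i => HasDerivAt.fun_sum (fun j _ => (hcomp j).const_mul (D i j))
  have h : HasDerivAt (fun y => ∑ i, v y i * ∑ j, D i j * v y j)
      (∑ i, (w i * ∑ j, D i j * v x j + v x i * ∑ j, D i j * w j)) x :=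
    HasDerivAt.fun_sum (fun i _ => (hcomp i).mul (hsum i))
  have heq : (∑ i, (w i * ∑ j, D i j * v x j + v x i * ∑ j, D i j * w j))
      = 2 * dotD D (v x) w := by
    rw [Finset.sum_add_distrib]
    have h1 : (∑ i, w i * ∑ j, D i j * v x j) = dotD D w (v x) := rfl
    have h2 : (∑ i, v x i * ∑ j, D i j * w j) = dotD D (v x) w := rfl
    rw [h1, h2, dotD_comm hD w (v x)]; ring
  rw [heq] at h
  exact h

lemma continuous_dotD_comp {f g : ℝ → EucSp n} (hf : Continuous f) (hg : Continuous g) :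
    Continuous fun x => dotD D (f x) (g x) := by
  unfold dotD
  exact continuous_finset_sum _ fun i _ =>
    ((EuclideanSpace.proj (𝕜 := ℝ) i).continuous.comp hf).mul <|
      continuous_finset_sum _ fun j _ =>
        continuous_const.mul ((EuclideanSpace.proj (𝕜 := ℝ) j).continuous.comp hg)

lemma integrableOn_exp_kx_Iic {κ : ℝ} (hκ : 0 < κ) :
    IntegrableOn (fun x => Real.exp (κ * x)) (Iic (0:ℝ)) := by
  have h_int : IntegrableOn (fun x => Real.exp (-κ * x)) (Ici (0:ℝ)) :=
    Iff.mpr integrableOn_Ici_iff_integrableOn_Ioi (exp_neg_integrableOn_Ioi 0 hκ)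
  have h_map_neg : ((volume : Measure ℝ).restrict (Ici (0:ℝ))).map Neg.neg
      = (volume : Measure ℝ).restrict (Iic 0) := by
    conv => rhs; rw [← Measure.map_neg_eq_self (volume : Measure ℝ),
      measurableEmbedding_neg.restrict_map]
    simp
  rw [IntegrableOn, ← h_map_neg, measurableEmbedding_neg.integrable_map_iff]
  have : ((fun x => Real.exp (κ * x)) ∘ Neg.neg) = fun x => Real.exp (-κ * x) := by
    ext x; simp [Function.comp, neg_mul, mul_neg]
  rwa [this]

end AuxStatement7

/-- control of the pointwise value `|v(0)|_D²` by a weighted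
integral of `|v|² + |v'|_D²`. -/
theorem statement7
    (n : ℕ) (hn : 1 ≤ n)
    (D : Matrix (Fin n) (Fin n) ℝ) (hD : D.PosDef)
    (lam : ℝ)
    (hlam : IsGreatest {l : ℝ | ∃ w : EucSp n, ‖w‖ = 1 ∧ l = dotD D w w} lam)
    (κ : ℝ) (hκ : 0 < κ)
    (v : ℝ → EucSp n) (hv : ContDiff ℝ 1 v)
    (hvb : ∃ C : ℝ, ∀ x : ℝ, ‖v x‖ ≤ C)
    (hvb' : ∃ C : ℝ, ∀ x : ℝ, ‖deriv v x‖ ≤ C) :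
    dotD D (v 0) (v 0) ≤ max ((1 + κ * lam) / 2) (lam / 2) *
      ∫ x : ℝ, psiW κ x * (‖v x‖ ^ 2 + dotD D (deriv v x) (deriv v x)) := by
  obtain ⟨Cv, hCv⟩ := hvb
  obtain ⟨Cw, hCw⟩ := hvb'
  have hCv0 : 0 ≤ Cv := le_trans (norm_nonneg (v 0)) (hCv 0)
  have hCw0 : 0 ≤ Cw := le_trans (norm_nonneg _) (hCw 0)
  set Cd : ℝ := ∑ i, ∑ j, |D i j| with hCd
  have hCd0 : 0 ≤ Cd := Finset.sum_nonneg fun i _ => Finset.sum_nonneg fun j _ => abs_nonneg _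
  set vd := deriv v with hvddef
  have hvdiff : Differentiable ℝ v := hv.differentiable one_ne_zero
  have hder : ∀ x, HasDerivAt v (vd x) x := fun x => (hvdiff x).hasDerivAt
  have hvdc : Continuous vd := hv.continuous_deriv le_rfl
  have hvc : Continuous v := hv.continuous
  have hlp : 0 < lam := lam_pos hD hlam
  set Q : ℝ → ℝ := fun x => dotD D (v x) (v x) with hQdef
  set P : ℝ → ℝ := fun x => 2 * dotD D (v x) (vd x) with hPdef
  have hQd : ∀ x, HasDerivAt Q (P x) x := fun x => hasDerivAt_dotD hD v (hder x)
  have hQc : Continuous Q := continuous_dotD_comp hvc hvc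
  have hPc : Continuous P := continuous_const.mul (continuous_dotD_comp hvc hvdc)
  -- bounds
  set CQ : ℝ := Cd * (Cv * Cv) with hCQdef
  set CP : ℝ := 2 * (Cd * (Cv * Cw)) with hCPdef
  have hQb : ∀ x, |Q x| ≤ CQ := fun x =>
    (abs_dotD_le _ _).trans (mul_le_mul_of_nonneg_left
      (mul_le_mul (hCv x) (hCv x) (norm_nonneg _) hCv0) hCd0)
  have hPb : ∀ x, |P x| ≤ CP := by
    intro x
    rw [hPdef]
    simp only [abs_mul, abs_two]
    rw [hCPdef]
    apply mul_le_mul_of_nonneg_left _ (by norm_num : (0:ℝ) ≤ 2)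
    exact (abs_dotD_le _ _).trans (mul_le_mul_of_nonneg_left
      (mul_le_mul (hCv x) (hCw x) (norm_nonneg _) hCv0) hCd0)
  -- the integrand
  set h : ℝ → ℝ := fun x => ‖v x‖ ^ 2 + dotD D (vd x) (vd x) with hhdef
  have hhc : Continuous h := (hvc.norm.pow 2).add (continuous_dotD_comp hvdc hvdc)
  have hh0 : ∀ x, 0 ≤ h x := fun x => add_nonneg (sq_nonneg _) (dotD_nonneg hD _)
  set Ch : ℝ := Cv ^ 2 + Cd * (Cw * Cw) with hChdef
  have hhb : ∀ x, h x ≤ Ch := by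
    intro x
    apply add_le_add
    · exact pow_le_pow_left₀ (norm_nonneg _) (hCv x) 2
    · exact (le_abs_self _).trans ((abs_dotD_le _ _).trans
        (mul_le_mul_of_nonneg_left (mul_le_mul (hCw x) (hCw x) (norm_nonneg _) hCw0) hCd0))
  set M : ℝ := max (1 + κ * lam) lam with hMdef
  -- pointwise key inequalities
  have key1 : ∀ x, P x + κ * Q x ≤ M * h x := by
    intro x
    have hc := dotD_cross hD hlam (v x) (vd x)
    have hl := dotD_le_lam hD hlam (v x)
    have hA : (0:ℝ) ≤ ‖v x‖ ^ 2 := sq_nonneg _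
    have hB : (0:ℝ) ≤ dotD D (vd x) (vd x) := dotD_nonneg hD _
    have hm1 : 1 + κ * lam ≤ M := le_max_left _ _
    have hm2 : lam ≤ M := le_max_right _ _
    have h1 : (0:ℝ) ≤ (M - (1 + κ * lam)) * ‖v x‖ ^ 2 :=
      mul_nonneg (sub_nonneg.mpr hm1) hA
    have h2 : (0:ℝ) ≤ (M - lam) * dotD D (vd x) (vd x) :=
      mul_nonneg (sub_nonneg.mpr hm2) hB
    have h3 : κ * dotD D (v x) (v x) ≤ κ * (lam * ‖v x‖ ^ 2) :=
      mul_le_mul_of_nonneg_left hl hκ.le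
    show 2 * dotD D (v x) (vd x) + κ * dotD D (v x) (v x)
      ≤ M * (‖v x‖ ^ 2 + dotD D (vd x) (vd x))
    nlinarith [hc, h1, h2, h3]
  have key2 : ∀ x, κ * Q x - P x ≤ M * h x := by
    intro x
    have hc := dotD_cross hD hlam (v x) (-(vd x))
    have hneg1 : dotD D (v x) (-(vd x)) = -dotD D (v x) (vd x) := by
      have : (-(vd x) : EucSp n) = (-1 : ℝ) • (vd x) := by simp
      rw [this, dotD_smul_right]; ring
    have hneg2 : dotD D (-(vd x)) (-(vd x)) = dotD D (vd x) (vd x) := by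
      have : (-(vd x) : EucSp n) = (-1 : ℝ) • (vd x) := by simp
      rw [this, dotD_smul_right, dotD_smul_left]; ring
    rw [hneg1, hneg2] at hc
    have hl := dotD_le_lam hD hlam (v x)
    have hA : (0:ℝ) ≤ ‖v x‖ ^ 2 := sq_nonneg _
    have hB : (0:ℝ) ≤ dotD D (vd x) (vd x) := dotD_nonneg hD _
    have h1 : (0:ℝ) ≤ (M - (1 + κ * lam)) * ‖v x‖ ^ 2 :=
      mul_nonneg (sub_nonneg.mpr (le_max_left _ _)) hA
    have h2 : (0:ℝ) ≤ (M - lam) * dotD D (vd x) (vd x) :=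
      mul_nonneg (sub_nonneg.mpr (le_max_right _ _)) hB
    have h3 : κ * dotD D (v x) (v x) ≤ κ * (lam * ‖v x‖ ^ 2) :=
      mul_le_mul_of_nonneg_left hl hκ.le
    show κ * dotD D (v x) (v x) - 2 * dotD D (v x) (vd x)
      ≤ M * (‖v x‖ ^ 2 + dotD D (vd x) (vd x))
    nlinarith [hc, h1, h2, h3]
  -- F on the right half line
  set F : ℝ → ℝ := fun x => Real.exp (-(κ * x)) * Q x with hFdef
  set F' : ℝ → ℝ := fun x => Real.exp (-(κ * x)) * (P x - κ * Q x) with hF'def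
  have hFd : ∀ x, HasDerivAt F (F' x) x := by
    intro x
    have hlin : HasDerivAt (fun y : ℝ => -(κ * y)) (-κ) x := by
      simpa using ((hasDerivAt_id x).const_mul κ).fun_neg
    have he : HasDerivAt (fun y : ℝ => Real.exp (-(κ * y)))
        (Real.exp (-(κ * x)) * (-κ)) x := hlin.exp
    have := he.fun_mul (hQd x)
    refine this.congr_deriv ?_
    rw [hF'def]; ring
  have hexp_tendsto : Tendsto (fun x : ℝ => Real.exp (-(κ * x))) atTop (𝓝 0) := by
    apply Real.tendsto_exp_atBot.comp
    exact tendsto_neg_atTop_atBot.comp (tendsto_id.const_mul_atTop hκ)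
  have hFtend : Tendsto F atTop (𝓝 0) := by
    apply squeeze_zero_norm (a := fun x => Real.exp (-(κ * x)) * CQ)
    · intro x
      rw [hFdef]
      simp only [norm_mul, Real.norm_eq_abs, Real.abs_exp]
      exact mul_le_mul_of_nonneg_left (hQb x) (Real.exp_pos _).le
    · simpa using hexp_tendsto.mul_const CQ
  have hexp_int_Ioi : IntegrableOn (fun x => Real.exp (-(κ * x))) (Ioi (0:ℝ)) := by
    have := exp_neg_integrableOn_Ioi (0:ℝ) hκ
    simpa [neg_mul] using this
  have hF'int : IntegrableOn F' (Ioi (0:ℝ)) := by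
    apply Integrable.mono' (g := fun x => (CP + κ * CQ) * Real.exp (-(κ * x)))
      (hexp_int_Ioi.const_mul _)
    · exact (((Real.continuous_exp.comp
        ((continuous_const.mul continuous_id).neg)).mul
        (hPc.sub (continuous_const.mul hQc))).aestronglyMeasurable).restrict
    · filter_upwards with x
      rw [hF'def]
      simp only [norm_mul, Real.norm_eq_abs, Real.abs_exp]
      rw [mul_comm (CP + κ * CQ) _]
      apply mul_le_mul_of_nonneg_left _ (Real.exp_pos _).le
      have h4 : |κ * Q x| ≤ κ * CQ := by
        rw [abs_mul, abs_of_pos hκ]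
        exact mul_le_mul_of_nonneg_left (hQb x) hκ.le
      calc |P x - κ * Q x| ≤ |P x| + |κ * Q x| := abs_sub _ _
        _ ≤ CP + κ * CQ := add_le_add (hPb x) h4
  have hIoi : ∫ x in Ioi (0:ℝ), F' x = 0 - F 0 :=
    integral_Ioi_of_hasDerivAt_of_tendsto' (fun x _ => hFd x) hF'int hFtend
  have hF0 : F 0 = Q 0 := by rw [hFdef]; simp
  -- G on the left half line
  set G : ℝ → ℝ := fun x => Real.exp (κ * x) * Q x with hGdef
  set G' : ℝ → ℝ := fun x => Real.exp (κ * x) * (P x + κ * Q x) with hG'def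
  have hGd : ∀ x, HasDerivAt G (G' x) x := by
    intro x
    have hlin : HasDerivAt (fun y : ℝ => κ * y) κ x := by
      simpa using (hasDerivAt_id x).const_mul κ
    have he : HasDerivAt (fun y : ℝ => Real.exp (κ * y))
        (Real.exp (κ * x) * κ) x := hlin.exp
    have := he.fun_mul (hQd x)
    refine this.congr_deriv ?_
    rw [hG'def]; ring
  have hexp_tendsto' : Tendsto (fun x : ℝ => Real.exp (κ * x)) atBot (𝓝 0) := by
    apply Real.tendsto_exp_atBot.comp
    exact tendsto_id.const_mul_atBot hκ
  have hGtend : Tendsto G atBot (𝓝 0) := by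
    apply squeeze_zero_norm (a := fun x => Real.exp (κ * x) * CQ)
    · intro x
      rw [hGdef]
      simp only [norm_mul, Real.norm_eq_abs, Real.abs_exp]
      exact mul_le_mul_of_nonneg_left (hQb x) (Real.exp_pos _).le
    · simpa using hexp_tendsto'.mul_const CQ
  have hexp_int_Iic : IntegrableOn (fun x => Real.exp (κ * x)) (Iic (0:ℝ)) :=
    integrableOn_exp_kx_Iic hκ
  have hG'int : IntegrableOn G' (Iic (0:ℝ)) := by
    apply Integrable.mono' (g := fun x => (CP + κ * CQ) * Real.exp (κ * x))
      (hexp_int_Iic.const_mul _)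
    · exact (((Real.continuous_exp.comp
        (continuous_const.mul continuous_id)).mul
        (hPc.add (continuous_const.mul hQc))).aestronglyMeasurable).restrict
    · filter_upwards with x
      rw [hG'def]
      simp only [norm_mul, Real.norm_eq_abs, Real.abs_exp]
      rw [mul_comm (CP + κ * CQ) _]
      apply mul_le_mul_of_nonneg_left _ (Real.exp_pos _).le
      have h4 : |κ * Q x| ≤ κ * CQ := by
        rw [abs_mul, abs_of_pos hκ]
        exact mul_le_mul_of_nonneg_left (hQb x) hκ.le
      calc |P x + κ * Q x| ≤ |P x| + |κ * Q x| := abs_add_le _ _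
        _ ≤ CP + κ * CQ := add_le_add (hPb x) h4
  have hIic : ∫ x in Iic (0:ℝ), G' x = G 0 - 0 :=
    integral_Iic_of_hasDerivAt_of_tendsto' (fun x _ => hGd x) hG'int hGtend
  have hG0 : G 0 = Q 0 := by rw [hGdef]; simp
  -- the weighted integrand
  set f : ℝ → ℝ := fun x => psiW κ x * h x with hfdef
  have hpsic : Continuous (psiW κ) :=
    Real.continuous_exp.comp (continuous_const.mul continuous_abs).neg
  have hfc : Continuous f := hpsic.mul hhc
  have hpsiIic : ∀ x ≤ (0:ℝ), psiW κ x = Real.exp (κ * x) := by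
    intro x hx
    rw [psiW, abs_of_nonpos hx]; ring_nf
  have hpsiIoi : ∀ x : ℝ, 0 ≤ x → psiW κ x = Real.exp (-(κ * x)) := by
    intro x hx
    rw [psiW, abs_of_nonneg hx]
  have hfi1 : IntegrableOn f (Iic (0:ℝ)) := by
    apply Integrable.mono' (g := fun x => Ch * Real.exp (κ * x))
      (hexp_int_Iic.const_mul _) (hfc.aestronglyMeasurable.restrict)
    rw [ae_restrict_iff' measurableSet_Iic]
    filter_upwards with x hx
    rw [hfdef]
    simp only [Real.norm_eq_abs]
    rw [hpsiIic x hx, abs_of_nonneg (mul_nonneg (Real.exp_pos _).le (hh0 x)),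
      mul_comm Ch _]
    exact mul_le_mul_of_nonneg_left (hhb x) (Real.exp_pos _).le
  have hfi2 : IntegrableOn f (Ioi (0:ℝ)) := by
    apply Integrable.mono' (g := fun x => Ch * Real.exp (-(κ * x)))
      (hexp_int_Ioi.const_mul _) (hfc.aestronglyMeasurable.restrict)
    rw [ae_restrict_iff' measurableSet_Ioi]
    filter_upwards with x hx
    rw [hfdef]
    simp only [Real.norm_eq_abs]
    rw [hpsiIoi x (le_of_lt hx), abs_of_nonneg (mul_nonneg (Real.exp_pos _).le (hh0 x)),
      mul_comm Ch _]
    exact mul_le_mul_of_nonneg_left (hhb x) (Real.exp_pos _).le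
  have hfint : Integrable f := by
    rw [← integrableOn_univ, ← Iic_union_Ioi (a := (0:ℝ))]
    exact hfi1.union hfi2
  -- compare the integrals
  have hle1 : ∫ x in Iic (0:ℝ), G' x ≤ ∫ x in Iic (0:ℝ), M * f x := by
    apply setIntegral_mono_on hG'int ((hfint.const_mul M).integrableOn) measurableSet_Iic
    intro x hx
    show Real.exp (κ * x) * (P x + κ * Q x) ≤ M * (psiW κ x * h x)
    rw [hpsiIic x hx,
      show M * (Real.exp (κ * x) * h x) = Real.exp (κ * x) * (M * h x) by ring]
    exact mul_le_mul_of_nonneg_left (key1 x) (Real.exp_pos _).le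
  have hle2 : ∫ x in Ioi (0:ℝ), (-F' x) ≤ ∫ x in Ioi (0:ℝ), M * f x := by
    apply setIntegral_mono_on hF'int.neg ((hfint.const_mul M).integrableOn) measurableSet_Ioi
    intro x hx
    show -(Real.exp (-(κ * x)) * (P x - κ * Q x)) ≤ M * (psiW κ x * h x)
    rw [hpsiIoi x (le_of_lt hx),
      show -(Real.exp (-(κ * x)) * (P x - κ * Q x))
        = Real.exp (-(κ * x)) * (κ * Q x - P x) by ring,
      show M * (Real.exp (-(κ * x)) * h x) = Real.exp (-(κ * x)) * (M * h x) by ring]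
    exact mul_le_mul_of_nonneg_left (key2 x) (Real.exp_pos _).le
  have hval1 : ∫ x in Iic (0:ℝ), G' x = Q 0 := by rw [hIic, hG0, sub_zero]
  have hval2 : ∫ x in Ioi (0:ℝ), (-F' x) = Q 0 := by
    rw [integral_neg, hIoi, hF0]; ring
  have hsum : (∫ x in Iic (0:ℝ), M * f x) + (∫ x in Ioi (0:ℝ), M * f x)
      = M * ∫ x, f x := by
    rw [intervalIntegral.integral_Iic_add_Ioi ((hfint.const_mul M).integrableOn)
      ((hfint.const_mul M).integrableOn), MeasureTheory.integral_const_mul]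
  have hmain : 2 * Q 0 ≤ M * ∫ x, f x := by
    calc 2 * Q 0 = (∫ x in Iic (0:ℝ), G' x) + (∫ x in Ioi (0:ℝ), (-F' x)) := by
          rw [hval1, hval2]; ring
      _ ≤ (∫ x in Iic (0:ℝ), M * f x) + (∫ x in Ioi (0:ℝ), M * f x) := add_le_add hle1 hle2
      _ = M * ∫ x, f x := hsum
  have hMhalf : max ((1 + κ * lam) / 2) (lam / 2) = M / 2 := by
    rw [hMdef]
    exact max_div_div_right (by norm_num) _ _
  rw [hMhalf]
  have : Q 0 = dotD D (v 0) (v 0) := rfl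
  rw [← this]
  have hIf : ∫ x : ℝ, psiW κ x * (‖v x‖ ^ 2 + dotD D (vd x) (vd x)) = ∫ x, f x := by
    rfl
  rw [hIf]
  linarith [hmain]
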